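/- arXiv:1804.01679 — 4 statements merged into one kernel-verified Lean document; each statement's English description precedes it below -/
import Mathlib

section
/- Let f : ℝ → ℂ be continuously differentiable on [0,∞). Assume that x ↦ f(x)/cosh²(πx) and x ↦ f'(x)/(e^{2πx}+1) are integrable on (0,∞), and that f(x)·e^{−2πx} → 0 as x → ∞. Then ∫_0^∞ f(x)/cosh²(πx) dx = f(0)/π + (2/π) · ∫_0^∞ f'(x)/(e^{2πx}+1) dx. -/
open Complex MeasureTheory Real Filter

lemma cosh_sq_exp_identity (y : ℝ) :
    4 * Real.exp (2 * y) * Real.cosh y ^ 2 = (Real.exp (2 * y) + 1) ^ 2 := by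
  have h2 : Real.exp (2 * y) = Real.exp y ^ 2 := by rw [two_mul, Real.exp_add, sq]
  rw [Real.cosh_eq, Real.exp_neg, h2]
  have := Real.exp_ne_zero y
  field_simp
  ring

/-- Integration by parts: if `f : ℝ → ℂ` is continuously differentiable on `[0,∞)`,
the functions `f(x)/cosh²(πx)` and `f'(x)/(e^{2πx}+1)` are integrable on `(0,∞)`,
and `f(x) e^{−2πx} → 0` as `x → ∞`, then
`∫_0^∞ f(x)/cosh²(πx) dx = f(0)/π + (2/π) ∫_0^∞ f'(x)/(e^{2πx}+1) dx`. -/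
theorem integral_sech_sq_eq_integration_by_parts (f f' : ℝ → ℂ)
    (hderiv : ∀ x ∈ Set.Ici (0 : ℝ), HasDerivWithinAt f (f' x) (Set.Ici 0) x)
    (hcont : ContinuousOn f' (Set.Ici 0))
    (hint1 : IntegrableOn (fun x : ℝ => f x / ((Real.cosh (Real.pi * x) : ℂ)) ^ 2)
      (Set.Ioi 0))
    (hint2 : IntegrableOn (fun x : ℝ => f' x / ((Real.exp (2 * Real.pi * x) : ℂ) + 1))
      (Set.Ioi 0))
    (hlim : Tendsto (fun x : ℝ => f x * (Real.exp (-(2 * Real.pi * x)) : ℂ)) atTop (nhds 0)) :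
    ∫ x in Set.Ioi (0 : ℝ), f x / ((Real.cosh (Real.pi * x) : ℂ)) ^ 2
      = f 0 / (Real.pi : ℂ) +
        (2 / (Real.pi : ℂ)) *
          ∫ x in Set.Ioi (0 : ℝ), f' x / ((Real.exp (2 * Real.pi * x) : ℂ) + 1) := by
  have hπ : (Real.pi : ℂ) ≠ 0 := Complex.ofReal_ne_zero.mpr Real.pi_ne_zero
  set v : ℝ → ℂ := fun x => -(2 / (Real.pi : ℂ)) * (((Real.exp (2 * Real.pi * x)) : ℂ) + 1)⁻¹
    with hv_def
  have hexp_ne : ∀ x : ℝ, ((Real.exp (2 * Real.pi * x)) : ℂ) + 1 ≠ 0 := by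
    intro x
    have h0 : (0 : ℝ) < Real.exp (2 * Real.pi * x) + 1 := by positivity
    intro h
    have h1 : ((Real.exp (2 * Real.pi * x) + 1 : ℝ) : ℂ) = 0 := by
      rw [Complex.ofReal_add, Complex.ofReal_one]; exact h
    have h2 : (Real.exp (2 * Real.pi * x) + 1 : ℝ) = 0 := by exact_mod_cast h1
    exact (ne_of_gt h0) h2
  have hcosh_ne : ∀ x : ℝ, ((Real.cosh (Real.pi * x)) : ℂ) ≠ 0 := fun x =>
    Complex.ofReal_ne_zero.mpr (ne_of_gt (Real.cosh_pos _))
  -- derivative of v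
  have hv : ∀ x : ℝ, HasDerivAt v (((Real.cosh (Real.pi * x) : ℂ)) ^ 2)⁻¹ x := by
    intro x
    have h1 : HasDerivAt (fun x : ℝ => Real.exp (2 * Real.pi * x))
        (Real.exp (2 * Real.pi * x) * (2 * Real.pi)) x := by
      simpa [Function.comp_def] using (Real.hasDerivAt_exp (2 * Real.pi * x)).comp x
        ((hasDerivAt_id x).const_mul (2 * Real.pi))
    have h2 : HasDerivAt (fun x : ℝ => ((Real.exp (2 * Real.pi * x)) : ℂ) + 1)
        (((Real.exp (2 * Real.pi * x) * (2 * Real.pi) : ℝ)) : ℂ) x :=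
      (h1.ofReal_comp).add_const 1
    have hinv := (hasDerivAt_inv (hexp_ne x)).comp x h2
    have h3 := hinv.const_mul (-(2 / (Real.pi : ℂ)))
    have h4 : HasDerivAt v
        (-(2 / (Real.pi : ℂ)) *
          ((-(((((Real.exp (2 * Real.pi * x)) : ℂ) + 1) ^ 2)⁻¹)) *
            (((Real.exp (2 * Real.pi * x) * (2 * Real.pi) : ℝ)) : ℂ)))
        x := h3
    convert h4 using 1
    have hid := cosh_sq_exp_identity (Real.pi * x)
    have hid' : (4 : ℂ) * (Real.exp (2 * Real.pi * x) : ℂ) *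
        ((Real.cosh (Real.pi * x)) : ℂ) ^ 2 = (((Real.exp (2 * Real.pi * x)) : ℂ) + 1) ^ 2 := by
      have h : 2 * (Real.pi * x) = 2 * Real.pi * x := by ring
      rw [h] at hid
      exact_mod_cast hid
    rw [Complex.ofReal_mul, Complex.ofReal_mul, Complex.ofReal_ofNat]
    set E : ℂ := ((Real.exp (2 * Real.pi * x)) : ℂ) with hE
    set C : ℂ := ((Real.cosh (Real.pi * x)) : ℂ) with hC
    have hE1 : E + 1 ≠ 0 := hexp_ne x
    have hC0 : C ≠ 0 := hcosh_ne x
    field_simp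
    linear_combination (-1 : ℂ) * hid'
  have hu : ∀ x ∈ Set.Ioi (0 : ℝ), HasDerivAt f (f' x) x := fun x hx =>
    (hderiv x (Set.mem_Ici.mpr (le_of_lt hx))).hasDerivAt (Ici_mem_nhds hx)
  -- integrability
  have huv' : IntegrableOn (f * fun x => (((Real.cosh (Real.pi * x) : ℂ)) ^ 2)⁻¹)
      (Set.Ioi 0) := by
    apply hint1.congr_fun _ measurableSet_Ioi
    intro x _
    simp [div_eq_mul_inv]
  have hu'v : IntegrableOn (f' * v) (Set.Ioi 0) := by
    have h : IntegrableOn (fun x : ℝ => -(2 / (Real.pi : ℂ)) *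
        (f' x / ((Real.exp (2 * Real.pi * x) : ℂ) + 1))) (Set.Ioi 0) :=
      hint2.const_mul (-(2 / (Real.pi : ℂ)))
    apply h.congr_fun _ measurableSet_Ioi
    intro x _
    simp only [hv_def, Pi.mul_apply, div_eq_mul_inv]
    ring
  -- limit at 0
  have hvc : Continuous v := by
    apply Continuous.mul continuous_const
    apply Continuous.inv₀
    · exact (Complex.continuous_ofReal.comp (Real.continuous_exp.comp (by continuity))).add
        continuous_const
    · exact hexp_ne
  have h_zero : Tendsto (f * v) (nhdsWithin 0 (Set.Ioi 0)) (nhds (f 0 * v 0)) := by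
    have hc : ContinuousWithinAt (f * v) (Set.Ici 0) 0 :=
      ((hderiv 0 Set.self_mem_Ici).continuousWithinAt).mul hvc.continuousWithinAt
    exact hc.mono_left (nhdsWithin_mono 0 Set.Ioi_subset_Ici_self)
  -- limit at infinity
  have h_infty : Tendsto (f * v) atTop (nhds 0) := by
    apply squeeze_zero_norm (a := fun x => (2 / Real.pi) *
      ‖f x * ((Real.exp (-(2 * Real.pi * x))) : ℂ)‖)
    · intro x
      have he : (0:ℝ) < Real.exp (2 * Real.pi * x) := Real.exp_pos _
      have hcast : ((Real.exp (2 * Real.pi * x)) : ℂ) + 1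
          = ((Real.exp (2 * Real.pi * x) + 1 : ℝ) : ℂ) := by push_cast; ring
      have hb : ‖(((Real.exp (2 * Real.pi * x)) : ℂ) + 1)⁻¹‖ ≤ Real.exp (-(2 * Real.pi * x)) := by
        rw [hcast, norm_inv, Complex.norm_real,
          Real.norm_of_nonneg (by positivity), Real.exp_neg]
        exact inv_anti₀ he (by linarith)
      have hnv : ‖v x‖ ≤ (2 / Real.pi) * Real.exp (-(2 * Real.pi * x)) := by
        rw [hv_def]
        simp only [norm_mul, norm_neg, norm_div]
        have h2 : ‖(2 : ℂ)‖ = 2 := by norm_num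
        have hπn : ‖(Real.pi : ℂ)‖ = Real.pi := by
          rw [Complex.norm_real, Real.norm_of_nonneg Real.pi_pos.le]
        rw [h2, hπn]
        have hpos : (0:ℝ) ≤ 2 / Real.pi := by positivity
        exact mul_le_mul_of_nonneg_left hb hpos
      calc ‖(f * v) x‖ = ‖f x‖ * ‖v x‖ := by rw [Pi.mul_apply, norm_mul]
        _ ≤ ‖f x‖ * ((2 / Real.pi) * Real.exp (-(2 * Real.pi * x))) :=
            mul_le_mul_of_nonneg_left hnv (norm_nonneg _)
        _ = (2 / Real.pi) * ‖f x * ((Real.exp (-(2 * Real.pi * x))) : ℂ)‖ := by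
            rw [norm_mul, Complex.norm_real, Real.norm_of_nonneg (Real.exp_pos _).le]
            ring
    · simpa using hlim.norm.const_mul (2 / Real.pi)
  have key := integral_Ioi_mul_deriv_eq_deriv_mul hu (fun x _ => hv x) huv' hu'v h_zero h_infty
  have hI1 : ∫ x in Set.Ioi (0:ℝ), f x / ((Real.cosh (Real.pi * x) : ℂ)) ^ 2
      = ∫ x in Set.Ioi (0:ℝ), f x * (((Real.cosh (Real.pi * x) : ℂ)) ^ 2)⁻¹ := by
    simp_rw [div_eq_mul_inv]
  have hI3 : ∫ x in Set.Ioi (0:ℝ), f' x * v x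
      = -(2 / (Real.pi : ℂ)) * ∫ x in Set.Ioi (0:ℝ),
          f' x / ((Real.exp (2 * Real.pi * x) : ℂ) + 1) := by
    rw [← MeasureTheory.integral_const_mul]
    congr 1
    funext x
    simp only [hv_def, div_eq_mul_inv]
    ring
  have hv0 : v 0 = -(1 / (Real.pi : ℂ)) := by
    simp only [hv_def, mul_zero, Real.exp_zero, Complex.ofReal_one]
    rw [show ((1:ℂ) + 1) = 2 by norm_num]
    field_simp
  rw [hI1, key, hI3, hv0]
  ring
end

section
/- Let a ∈ ℂ with Re(a) > 0, let n ∈ ℕ, and let N ∈ ℝ with N ≥ n + 2 + |Im(a)|. Then the tail integral T_N = ∫_N^∞ (log(a + ix))^{n+1} / cosh²(πx) dx satisfies ‖T_N‖ < 0.934 · e^{−2πN} · ‖log(a + Ni)‖^{n+1}. -/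
open Complex MeasureTheory Real

open Set in
-- auxiliary: integral of exp(-k x) on Ioi
lemma aux_integral_exp_neg (k N : ℝ) (hk : 0 < k) :
    ∫ x in Set.Ioi N, Real.exp (-k * x) = Real.exp (-k * N) / k := by
  have hderiv : ∀ x ∈ Ici N, HasDerivAt (fun x => -Real.exp (-k * x) / k) (Real.exp (-k * x)) x := by
    intro x _
    have h1 : HasDerivAt (fun x : ℝ => -k * x) (-k) x := by
      simpa using (hasDerivAt_id x).const_mul (-k)
    have := (h1.exp.neg).div_const k
    refine this.congr_deriv ?_
    rw [mul_neg, neg_neg, mul_div_assoc, div_self hk.ne', mul_one]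
  have htend : Filter.Tendsto (fun x => -Real.exp (-k * x) / k) Filter.atTop (nhds 0) := by
    have : Filter.Tendsto (fun x : ℝ => Real.exp (-k * x)) Filter.atTop (nhds 0) :=
      Real.tendsto_exp_atBot.comp (Filter.tendsto_id.const_mul_atTop_of_neg (by linarith))
    simpa using (this.neg).div_const k
  have := MeasureTheory.integral_Ioi_of_hasDerivAt_of_tendsto' hderiv
    ((exp_neg_integrableOn_Ioi N hk)) htend
  rw [this]
  ring


open Set in
/-- Tail bound: for `a ∈ ℂ` with `Re a > 0`, `n ∈ ℕ` and real `N ≥ n + 2 + |Im a|`,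
`‖∫_N^∞ log^{n+1}(a+ix)/cosh²(πx) dx‖ < 0.934 e^{−2πN} ‖log(a+Ni)‖^{n+1}`. -/
theorem stieltjes_tail_bound (a : ℂ) (ha : 0 < a.re) (n : ℕ) (N : ℝ)
    (hN : (n : ℝ) + 2 + |a.im| ≤ N) :
    ‖∫ x in Set.Ioi N,
        (Complex.log (a + Complex.I * x)) ^ (n + 1) / ((Real.cosh (Real.pi * x) : ℂ)) ^ 2‖
      < 0.934 * Real.exp (-(2 * Real.pi * N)) *
          ‖Complex.log (a + (N : ℂ) * Complex.I)‖ ^ (n + 1) := by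
  have hπ : (3.141592 : ℝ) < Real.pi := Real.pi_gt_d6
  set L : ℝ := ‖Complex.log (a + (N : ℂ) * Complex.I)‖ with hLdef
  set f : ℝ → ℂ := fun x =>
    (Complex.log (a + Complex.I * x)) ^ (n + 1) / ((Real.cosh (Real.pi * x) : ℂ)) ^ 2 with hfdef
  have hb : 0 ≤ |a.im| := abs_nonneg _
  -- |a + I t| ≥ n + 2 for t ≥ N
  have habs : ∀ t : ℝ, N ≤ t → (n : ℝ) + 2 ≤ ‖a + Complex.I * t‖ := by
    intro t ht
    have him : (a + Complex.I * t).im = a.im + t := by simp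
    have h1 : a.im + t ≤ ‖a + Complex.I * t‖ := him ▸ Complex.im_le_norm _
    have h2 : -|a.im| ≤ a.im := neg_abs_le _
    have hnn : (0:ℝ) ≤ (n:ℝ) := Nat.cast_nonneg n
    linarith
  -- slitPlane membership
  have hslit : ∀ t : ℝ, a + Complex.I * t ∈ Complex.slitPlane := by
    intro t
    rw [Complex.mem_slitPlane_iff]
    left; simpa using ha
  -- L ≥ log 2 ≥ 2/3
  have hL23 : (2:ℝ)/3 ≤ L := by
    have habsN : (2:ℝ) ≤ ‖a + (N:ℂ) * Complex.I‖ := by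
      have := habs N le_rfl
      have : ‖a + (N:ℂ)*Complex.I‖ = ‖a + Complex.I * N‖ := by
        ring_nf
      rw [this]
      have hnn : (0:ℝ) ≤ (n:ℝ) := Nat.cast_nonneg n
      linarith [habs N le_rfl]
    have hre : (Complex.log (a + (N:ℂ) * Complex.I)).re
        = Real.log (‖a + (N:ℂ) * Complex.I‖) := Complex.log_re _
    have h1 : Real.log 2 ≤ Real.log (‖a + (N:ℂ) * Complex.I‖) :=
      Real.log_le_log two_pos habsN
    have h2 : (Complex.log (a + (N:ℂ) * Complex.I)).re ≤ L :=
      le_trans (le_abs_self _) (Complex.abs_re_le_norm _)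
    have hlog2 : (2:ℝ)/3 < Real.log 2 := by
      linarith [Real.log_two_gt_d9]
    linarith [hre ▸ h1]
  have hL0 : 0 < L := by linarith
  -- MVT bound : ‖log(a+Ix)‖ ≤ L + (x-N)/(n+2) for x ≥ N
  have hMVT : ∀ x : ℝ, N ≤ x →
      ‖Complex.log (a + Complex.I * x)‖ ≤ L + (x - N) / ((n:ℝ) + 2) := by
    intro x hx
    set φ : ℝ → ℂ := fun t => Complex.log (a + Complex.I * t) with hφ
    have hder : ∀ t ∈ Icc N x, HasDerivWithinAt φ ((a + Complex.I * t)⁻¹ * Complex.I) (Icc N x) t := by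
      intro t _
      have hinner : HasDerivAt (fun w : ℂ => a + Complex.I * w) Complex.I (t:ℂ) := by
        simpa using ((hasDerivAt_id (t:ℂ)).const_mul Complex.I).const_add a
      have hlog : HasDerivAt (fun w : ℂ => Complex.log (a + Complex.I * w))
          ((a + Complex.I * t)⁻¹ * Complex.I) (t:ℂ) :=
        by have := hinner.clog (hslit t); rw [div_eq_inv_mul] at this; exact this
      exact (hlog.comp_ofReal).hasDerivWithinAt
    have hbound : ∀ t ∈ Ico N x, ‖(a + Complex.I * t)⁻¹ * Complex.I‖ ≤ ((n:ℝ) + 2)⁻¹ := by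
      intro t ht
      have h1 := habs t ht.1
      have hpos : (0:ℝ) < (n:ℝ) + 2 := by positivity
      rw [norm_mul, Complex.norm_I, mul_one, norm_inv]
      exact inv_anti₀ hpos h1
    have := norm_image_sub_le_of_norm_deriv_le_segment' hder hbound x
      (by constructor <;> [exact hx; exact le_rfl])
    have hφN : φ N = Complex.log (a + (N:ℂ) * Complex.I) := by
      simp only [hφ]; ring_nf
    have hLnorm : ‖φ N‖ = L := by rw [hφN]
    calc ‖Complex.log (a + Complex.I * x)‖
        = ‖φ x - φ N + φ N‖ := by simp [hφ]
      _ ≤ ‖φ x - φ N‖ + ‖φ N‖ := norm_add_le _ _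
      _ ≤ ((n:ℝ)+2)⁻¹ * (x - N) + L := add_le_add this (le_of_eq hLnorm)
      _ = L + (x - N) / ((n:ℝ)+2) := by ring
  -- constants
  set k : ℝ := 2 * Real.pi - 3/2 with hkdef
  have hkpos : 0 < k := by rw [hkdef]; nlinarith
  set C : ℝ := 4 * L ^ (n+1) * Real.exp (-(3/2) * N) with hCdef
  set g : ℝ → ℝ := fun x => C * Real.exp (-k * x) with hgdef
  -- pointwise bound
  have hpt : ∀ x ∈ Ioi N, ‖f x‖ ≤ g x := by
    intro x hx
    have hx' : N ≤ x := le_of_lt hx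
    have hxN : 0 ≤ x - N := by linarith
    -- numerator bound
    have hDpos : (0:ℝ) < ((n:ℝ) + 2) * L := by positivity
    set u : ℝ := (x - N) / (((n:ℝ) + 2) * L) with hudef
    have hu0 : 0 ≤ u := by positivity
    have h1 : L + (x - N) / ((n:ℝ) + 2) ≤ L * Real.exp u := by
      have he : u + 1 ≤ Real.exp u := Real.add_one_le_exp u
      have : L + (x - N) / ((n:ℝ) + 2) = L * (u + 1) := by
        rw [hudef]; field_simp; ring
      rw [this]
      exact mul_le_mul_of_nonneg_left he hL0.le
    have hnum : ‖Complex.log (a + Complex.I * x)‖ ^ (n+1)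
        ≤ L ^ (n+1) * Real.exp ((3/2) * (x - N)) := by
      have h2 : ‖Complex.log (a + Complex.I * x)‖ ^ (n+1) ≤ (L * Real.exp u) ^ (n+1) :=
        pow_le_pow_left₀ (norm_nonneg _) ((hMVT x hx').trans h1) _
      have h3 : (L * Real.exp u) ^ (n+1) = L ^ (n+1) * Real.exp (((n:ℝ)+1) * u) := by
        rw [mul_pow, ← Real.exp_nat_mul]
        push_cast
        ring_nf
      have h4 : ((n:ℝ)+1) * u ≤ (3/2) * (x - N) := by
        rw [hudef, ← mul_div_assoc, div_le_iff₀ hDpos]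
        have hkey : (n:ℝ) + 1 ≤ (3/2) * (((n:ℝ) + 2) * L) := by nlinarith [Nat.cast_nonneg (α := ℝ) n]
        nlinarith
      calc ‖Complex.log (a + Complex.I * x)‖ ^ (n+1)
          ≤ L ^ (n+1) * Real.exp (((n:ℝ)+1) * u) := by rw [← h3]; exact h2
        _ ≤ L ^ (n+1) * Real.exp ((3/2) * (x - N)) := by
            exact mul_le_mul_of_nonneg_left (Real.exp_le_exp.mpr h4) (by positivity)
    -- denominator bound
    have hcosh : Real.exp (2 * Real.pi * x) / 4 ≤ (Real.cosh (Real.pi * x)) ^ 2 := by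
      have h5 : Real.exp (Real.pi * x) / 2 ≤ Real.cosh (Real.pi * x) := by
        rw [Real.cosh_eq]
        have := (Real.exp_pos (-(Real.pi * x))).le
        linarith
      have h6 : (Real.exp (Real.pi * x) / 2) ^ 2 ≤ (Real.cosh (Real.pi * x)) ^ 2 :=
        pow_le_pow_left₀ (by positivity) h5 _
      calc Real.exp (2 * Real.pi * x) / 4
          = (Real.exp (Real.pi * x) / 2) ^ 2 := by
            rw [div_pow, ← Real.exp_nat_mul]; norm_num; ring_nf
        _ ≤ _ := h6
    -- norm of f
    have hnormf : ‖f x‖ = ‖Complex.log (a + Complex.I * x)‖ ^ (n+1)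
        / (Real.cosh (Real.pi * x)) ^ 2 := by
      rw [hfdef]
      simp only [norm_div, norm_pow, Complex.norm_real, Real.norm_eq_abs]
      rw [abs_of_pos (Real.cosh_pos _)]
    rw [hnormf]
    have hstep : ‖Complex.log (a + Complex.I * x)‖ ^ (n+1) / (Real.cosh (Real.pi * x)) ^ 2
        ≤ (L ^ (n+1) * Real.exp ((3/2) * (x - N))) / (Real.exp (2 * Real.pi * x) / 4) :=
      div_le_div₀ (by positivity) hnum (by positivity) hcosh
    refine hstep.trans (le_of_eq ?_)
    have hAB : Real.exp ((3:ℝ)/2 * (x - N))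
        = Real.exp (-(3/2) * N) * Real.exp (-k * x) * Real.exp (2 * Real.pi * x) := by
      rw [← Real.exp_add, ← Real.exp_add]
      congr 1
      rw [hkdef]; ring
    show L ^ (n+1) * Real.exp ((3:ℝ)/2 * (x - N)) / (Real.exp (2 * Real.pi * x) / 4)
        = C * Real.exp (-k * x)
    rw [hAB, hCdef]
    have hne : Real.exp (2 * Real.pi * x) ≠ 0 := (Real.exp_pos _).ne'
    field_simp
  -- integrability of g
  have hgint : IntegrableOn g (Ioi N) := by
    rw [hgdef]
    exact (exp_neg_integrableOn_Ioi N hkpos).const_mul C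
  -- norm of integral bounded
  have hle : ‖∫ x in Ioi N, f x‖ ≤ ∫ x in Ioi N, g x := by
    refine MeasureTheory.norm_integral_le_of_norm_le hgint ?_
    exact (ae_restrict_iff' measurableSet_Ioi).mpr (Filter.Eventually.of_forall hpt)
  have hgval : ∫ x in Ioi N, g x = C * (Real.exp (-k * N) / k) := by
    rw [hgdef]
    rw [MeasureTheory.integral_const_mul, aux_integral_exp_neg k N hkpos]
  have hfinal : C * (Real.exp (-k * N) / k)
      < 0.934 * Real.exp (-(2 * Real.pi * N)) * L ^ (n+1) := by
    have hexp : Real.exp (-(3/2) * N) * Real.exp (-k * N) = Real.exp (-(2 * Real.pi * N)) := by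
      rw [← Real.exp_add]
      congr 1
      rw [hkdef]; ring
    have hCval : C * (Real.exp (-k * N) / k)
        = 4 * L ^ (n+1) * Real.exp (-(2 * Real.pi * N)) / k := by
      calc C * (Real.exp (-k * N) / k)
          = 4 * L ^ (n+1) * (Real.exp (-(3/2) * N) * Real.exp (-k * N)) / k := by
            rw [hCdef]; ring
        _ = _ := by rw [hexp]
    rw [hCval]
    rw [div_lt_iff₀ hkpos]
    have hE : 0 < Real.exp (-(2 * Real.pi * N)) := Real.exp_pos _
    have hP : 0 < L ^ (n+1) := pow_pos hL0 _
    have hk4 : (4:ℝ) < 0.934 * k := by rw [hkdef]; nlinarith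
    nlinarith [mul_pos hE hP]
  calc ‖∫ x in Ioi N, f x‖ ≤ ∫ x in Ioi N, g x := hle
    _ = C * (Real.exp (-k * N) / k) := hgval
    _ < 0.934 * Real.exp (-(2 * Real.pi * N)) * L ^ (n+1) := hfinal
end

section
/- Fix n ∈ ℕ and a ∈ ℂ, and define g(u) = (n+1)·log(log(a + iu)) − 2πu, g'(u) = i(n+1)/((a+iu)·log(a+iu)) − 2π, and g''(u) = (n+1)·(1 + 1/log(a+iu)) / ((a+iu)² · log(a+iu)). Let m ∈ ℂ, r > 0, and G ≥ 0, and suppose that for every u in the closed disk of center m and radius r: Re(u) ≥ 1, a + iu is not a nonpositive real number, log(a + iu) is not a nonpositive real number, and ‖g''(u)‖ ≤ G. Then for every z in this closed disk, ‖(log(a + iz))^{n+1} / cosh²(πz)‖ < 4.015 · ‖exp(g(m))‖ · exp( ‖g'(m)‖·r + G·r²/2 ). -/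
open Complex MeasureTheory Real

lemma sp_aux_exp_num : Real.exp (-(2*Real.pi)) ≤ 0.001868 := by
  have hpi : (3.141592:ℝ) < Real.pi := Real.pi_gt_d6
  have h1 : (1.3273:ℝ) ≤ Real.exp 0.283184 := by
    have := Real.sum_le_exp_of_nonneg (by norm_num : (0:ℝ) ≤ 0.283184) 5
    simp [Finset.sum_range_succ, Nat.factorial] at this
    norm_num at this ⊢
    linarith
  have h2 : (2.7182818283:ℝ) ^ 6 ≤ Real.exp 1 ^ 6 :=
    pow_le_pow_left₀ (by norm_num) (le_of_lt Real.exp_one_gt_d9) 6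
  have h3 : (535.4:ℝ) ≤ Real.exp 6.283184 := by
    have he : Real.exp 6.283184 = Real.exp 1 ^ 6 * Real.exp 0.283184 := by
      rw [← Real.exp_nat_mul, ← Real.exp_add]; norm_num
    rw [he]
    calc (535.4:ℝ) ≤ 2.7182818283 ^ 6 * 1.3273 := by norm_num
      _ ≤ Real.exp 1 ^ 6 * Real.exp 0.283184 :=
          mul_le_mul h2 h1 (by norm_num) (le_of_lt (by positivity))
  have h4 : (535.4:ℝ) ≤ Real.exp (2*Real.pi) :=
    h3.trans (Real.exp_le_exp.2 (by linarith))
  rw [Real.exp_neg]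
  rw [inv_le_comm₀ ((lt_of_lt_of_le (by norm_num) h4)) (by norm_num)]
  exact le_trans (by norm_num) h4

lemma sp_aux_ident (n : ℕ) (z L : ℂ) (hL : L ≠ 0)
    (hden : 1 + Complex.exp (-(2 * (Real.pi:ℂ) * z)) ≠ 0) :
    L ^ (n+1) / (Complex.cosh ((Real.pi:ℂ) * z)) ^ 2 =
      Complex.exp (((n:ℂ)+1) * Complex.log L - 2 * (Real.pi:ℂ) * z) *
        (2 / (1 + Complex.exp (-(2 * (Real.pi:ℂ) * z)))) ^ 2 := by
  set w : ℂ := (Real.pi:ℂ) * z with hw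
  have hA : Complex.exp w ≠ 0 := Complex.exp_ne_zero w
  have hE : Complex.exp (-(2 * (Real.pi:ℂ) * z)) = (Complex.exp w)⁻¹ ^ 2 := by
    rw [← Complex.exp_neg, ← Complex.exp_nat_mul, hw]; ring_nf
  have hexp : Complex.exp (((n:ℂ)+1) * Complex.log L - 2 * (Real.pi:ℂ) * z)
      = L ^ (n+1) * (Complex.exp w)⁻¹ ^ 2 := by
    rw [Complex.exp_sub, div_eq_mul_inv, ← Complex.exp_neg, hE]
    congr 1
    rw [show ((n:ℂ)+1) = ((n+1 : ℕ):ℂ) by push_cast; ring, Complex.exp_nat_mul,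
      Complex.exp_log hL]
  have h1B : (1:ℂ) + Complex.exp w ^ 2 ≠ 0 := by
    intro h0
    apply hden
    rw [hE]
    have hh : (Complex.exp w)⁻¹ ^ 2 = (1 + Complex.exp w ^ 2)/(Complex.exp w ^ 2) - 1 := by
      field_simp
      ring
    rw [hh, h0]
    simp
  have hcosh : Complex.cosh w = (1 + Complex.exp w ^ 2) / (2 * Complex.exp w) := by
    show (Complex.exp w + Complex.exp (-w)) / 2 = _
    rw [Complex.exp_neg]
    field_simp
    ring
  have hsum : (1:ℂ) + (Complex.exp w)⁻¹ ^ 2 = (1 + Complex.exp w ^ 2)/(Complex.exp w ^ 2) := by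
    field_simp
    ring
  rw [hexp, hcosh, hE, hsum, div_div_eq_mul_div]
  field_simp [h1B]

lemma sp_aux_d1 (n : ℕ) (a u : ℂ) (h1 : (a + Complex.I * u) ∈ Complex.slitPlane)
    (h2 : Complex.log (a + Complex.I * u) ∈ Complex.slitPlane) :
    HasDerivAt (fun v => ((n : ℂ) + 1) * Complex.log (Complex.log (a + Complex.I * v)) -
        2 * (Real.pi : ℂ) * v)
      (Complex.I * ((n : ℂ) + 1) / ((a + Complex.I * u) * Complex.log (a + Complex.I * u)) -
        2 * (Real.pi : ℂ)) u := by
  have hw : HasDerivAt (fun v : ℂ => a + Complex.I * v) Complex.I u := by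
    simpa using ((hasDerivAt_id u).const_mul Complex.I).const_add a
  have hL := hw.clog h1
  have hLL := hL.clog h2
  have hwne : (a + Complex.I * u) ≠ 0 := Complex.slitPlane_ne_zero h1
  have hLne : Complex.log (a + Complex.I * u) ≠ 0 := Complex.slitPlane_ne_zero h2
  have := (hLL.const_mul ((n : ℂ) + 1)).sub (((hasDerivAt_id u).const_mul (2 * (Real.pi:ℂ))))
  refine this.congr_deriv ?_
  field_simp

lemma sp_aux_d2 (n : ℕ) (a u : ℂ) (h1 : (a + Complex.I * u) ∈ Complex.slitPlane)
    (h2 : Complex.log (a + Complex.I * u) ∈ Complex.slitPlane) :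
    HasDerivAt (fun v => Complex.I * ((n : ℂ) + 1) /
        ((a + Complex.I * v) * Complex.log (a + Complex.I * v)) - 2 * (Real.pi : ℂ))
      (((n : ℂ) + 1) * (1 + 1 / Complex.log (a + Complex.I * u)) /
          ((a + Complex.I * u) ^ 2 * Complex.log (a + Complex.I * u))) u := by
  have hw : HasDerivAt (fun v : ℂ => a + Complex.I * v) Complex.I u := by
    simpa using ((hasDerivAt_id u).const_mul Complex.I).const_add a
  have hL := hw.clog h1
  have hwne : (a + Complex.I * u) ≠ 0 := Complex.slitPlane_ne_zero h1
  have hLne : Complex.log (a + Complex.I * u) ≠ 0 := Complex.slitPlane_ne_zero h2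
  have hden : HasDerivAt (fun v : ℂ => (a + Complex.I * v) * Complex.log (a + Complex.I * v))
      (Complex.I * Complex.log (a + Complex.I * u) +
        (a + Complex.I * u) * (Complex.I / (a + Complex.I * u))) u := hw.mul hL
  have hdenne : (a + Complex.I * u) * Complex.log (a + Complex.I * u) ≠ 0 :=
    mul_ne_zero hwne hLne
  have := ((hasDerivAt_const u (Complex.I * ((n : ℂ) + 1))).div hden hdenne).sub_const
    (2 * (Real.pi:ℂ))
  refine this.congr_deriv ?_
  have hI : (Complex.I : ℂ) ^ 2 = -1 := Complex.I_sq
  field_simp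
  ring_nf
  have hI4 : (Complex.I:ℂ)^4 = 1 := by
    rw [show (4:ℕ)=2*2 from rfl, pow_mul, Complex.I_sq]; norm_num
  have hI3 : (Complex.I:ℂ)^3 = -Complex.I := by
    rw [pow_succ, Complex.I_sq]; ring
  simp only [hI4, hI3, Complex.I_sq]
  ring

lemma sp_aux_taylor {g g1 g2 : ℂ → ℂ} {m z : ℂ} {r G : ℝ} (hG : 0 ≤ G) (hr : 0 ≤ r)
    (hz : z ∈ Metric.closedBall m r)
    (hd1 : ∀ u ∈ Metric.closedBall m r, HasDerivAt g (g1 u) u)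
    (hd2 : ∀ u ∈ Metric.closedBall m r, HasDerivAt g1 (g2 u) u)
    (hb : ∀ u ∈ Metric.closedBall m r, ‖g2 u‖ ≤ G) :
    ‖g z - g m - g1 m * (z - m)‖ ≤ G * r ^ 2 / 2 := by
  have hm : m ∈ Metric.closedBall m r := Metric.mem_closedBall_self hr
  have hzm : ‖z - m‖ ≤ r := by
    rw [← dist_eq_norm]; exact Metric.mem_closedBall.1 hz
  have hlip : ∀ u ∈ Metric.closedBall m r, ‖g1 u - g1 m‖ ≤ G * ‖u - m‖ := fun u hu =>
    (convex_closedBall m r).norm_image_sub_le_of_norm_hasDerivWithin_le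
      (fun x hx => (hd2 x hx).hasDerivWithinAt) hb hm hu
  set p : ℝ → ℂ := fun t => m + t • (z - m) with hp0
  have hp : ∀ t : ℝ, HasDerivAt p (z - m) t := fun t => by
    simpa [hp0] using ((hasDerivAt_id t).smul_const (z - m)).const_add m
  have hpm : ∀ t : ℝ, p t - m = t • (z - m) := fun t => by simp [hp0]
  have hpD : ∀ t ∈ Set.Icc (0:ℝ) 1, p t ∈ Metric.closedBall m r := by
    intro t ht
    rw [Metric.mem_closedBall, dist_eq_norm, hpm t, norm_smul, Real.norm_eq_abs,
      _root_.abs_of_nonneg ht.1]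
    calc t * ‖z - m‖ ≤ 1 * ‖z - m‖ := by
          apply mul_le_mul_of_nonneg_right ht.2 (norm_nonneg _)
      _ ≤ r := by rw [one_mul]; exact hzm
  set F : ℝ → ℂ := fun t => g (p t) - g m - t • (g1 m * (z - m)) with hF0
  have hF : ∀ t ∈ Set.Icc (0:ℝ) 1, HasDerivAt F ((g1 (p t) - g1 m) * (z - m)) t := by
    intro t ht
    have h1A : HasDerivAt (fun s : ℝ => g (p s)) ((z - m) • g1 (p t)) t :=
      (hd1 (p t) (hpD t ht)).scomp t (hp t)
    have h2A : HasDerivAt (fun s : ℝ => s • (g1 m * (z - m))) (g1 m * (z - m)) t := by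
      simpa using (hasDerivAt_id t).smul_const (g1 m * (z - m))
    have := (h1A.sub_const (g m)).sub h2A
    refine this.congr_deriv ?_
    simp only [smul_eq_mul]
    ring
  have key := image_norm_le_of_norm_deriv_right_le_deriv_boundary
    (f := F) (f' := fun t => (g1 (p t) - g1 m) * (z - m)) (a := 0) (b := 1)
    (B := fun t => G * ‖z - m‖^2 / 2 * t^2) (B' := fun t => G * ‖z - m‖^2 * t)
    (fun t ht => ((hF t ht).continuousAt).continuousWithinAt)
    (fun t ht => (hF t (Set.Ico_subset_Icc_self ht)).hasDerivWithinAt)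
    (by simp [hF0, hp0])
    (by
      intro t
      show HasDerivAt (fun t : ℝ => G * ‖z - m‖ ^ 2 / 2 * t ^ 2) (G * ‖z - m‖ ^ 2 * t) t
      have h2' : G * ‖z - m‖ ^ 2 * t = (G * ‖z - m‖^2 / 2) * ((2:ℕ) * t ^ (2-1)) := by
        push_cast; ring
      rw [h2']
      exact (hasDerivAt_pow 2 t).const_mul _)
    (by
      intro t ht
      have hptD := hpD t ⟨ht.1, le_of_lt ht.2⟩
      rw [norm_mul]
      calc ‖g1 (p t) - g1 m‖ * ‖z - m‖ ≤ (G * ‖p t - m‖) * ‖z - m‖ :=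
            mul_le_mul_of_nonneg_right (hlip (p t) hptD) (norm_nonneg _)
        _ = G * ‖z - m‖^2 * t := by
            rw [hpm t, norm_smul, Real.norm_eq_abs, _root_.abs_of_nonneg ht.1]
            ring)
  have h1 := key (Set.right_mem_Icc.2 zero_le_one)
  have hF1 : F 1 = g z - g m - g1 m * (z - m) := by
    simp [hF0, hp0]
  rw [hF1] at h1
  calc ‖g z - g m - g1 m * (z - m)‖ ≤ G * ‖z - m‖^2 / 2 * 1^2 := h1
    _ ≤ G * r^2 / 2 := by
        rw [one_pow, mul_one]
        gcongr

/-- Saddle-point bound: with `g(u) = (n+1) log(log(a+iu)) − 2πu`,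
`g'(u) = i(n+1)/((a+iu) log(a+iu)) − 2π` and
`g''(u) = (n+1)(1 + 1/log(a+iu))/((a+iu)² log(a+iu))`, if on the closed disk of center `m`
and radius `r` we have `Re u ≥ 1`, `a+iu` and `log(a+iu)` avoid the nonpositive real axis,
and `‖g''(u)‖ ≤ G`, then for every `z` in the disk
`‖log^{n+1}(a+iz)/cosh²(πz)‖ < 4.015 ‖exp(g(m))‖ exp(‖g'(m)‖ r + G r²/2)`. -/
theorem saddle_point_integrand_bound (n : ℕ) (a m : ℂ) (r G : ℝ) (hr : 0 < r) (hG : 0 ≤ G)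
    (h : ∀ u ∈ Metric.closedBall m r,
      1 ≤ u.re ∧
      (a + Complex.I * u) ∈ Complex.slitPlane ∧
      Complex.log (a + Complex.I * u) ∈ Complex.slitPlane ∧
      ‖((n : ℂ) + 1) * (1 + 1 / Complex.log (a + Complex.I * u)) /
          ((a + Complex.I * u) ^ 2 * Complex.log (a + Complex.I * u))‖ ≤ G) :
    ∀ z ∈ Metric.closedBall m r,
      ‖(Complex.log (a + Complex.I * z)) ^ (n + 1) / (Complex.cosh (Real.pi * z)) ^ 2‖
        < 4.015 *
            ‖Complex.exp (((n : ℂ) + 1) * Complex.log (Complex.log (a + Complex.I * m)) -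
              2 * Real.pi * m)‖ *
            Real.exp
              (‖Complex.I * ((n : ℂ) + 1) /
                  ((a + Complex.I * m) * Complex.log (a + Complex.I * m)) -
                  2 * Real.pi‖ * r + G * r ^ 2 / 2) := by
  intro z hz
  obtain ⟨hz1, hza, hzl, _⟩ := h z hz
  have hm : m ∈ Metric.closedBall m r := Metric.mem_closedBall_self hr.le
  set g : ℂ → ℂ := fun u => ((n : ℂ) + 1) * Complex.log (Complex.log (a + Complex.I * u)) -
    2 * (Real.pi : ℂ) * u with hgdef
  set g1 : ℂ → ℂ := fun u => Complex.I * ((n : ℂ) + 1) /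
    ((a + Complex.I * u) * Complex.log (a + Complex.I * u)) - 2 * (Real.pi : ℂ) with hg1def
  set g2 : ℂ → ℂ := fun u => ((n : ℂ) + 1) * (1 + 1 / Complex.log (a + Complex.I * u)) /
    ((a + Complex.I * u) ^ 2 * Complex.log (a + Complex.I * u)) with hg2def
  -- Taylor bound
  have htay : ‖g z - g m - g1 m * (z - m)‖ ≤ G * r ^ 2 / 2 :=
    sp_aux_taylor hG hr.le hz
      (fun u hu => sp_aux_d1 n a u (h u hu).2.1 (h u hu).2.2.1)
      (fun u hu => sp_aux_d2 n a u (h u hu).2.1 (h u hu).2.2.1)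
      (fun u hu => (h u hu).2.2.2)
  have hzm : ‖z - m‖ ≤ r := by rw [← dist_eq_norm]; exact Metric.mem_closedBall.1 hz
  have hgz : ‖g z - g m‖ ≤ ‖g1 m‖ * r + G * r ^ 2 / 2 := by
    have h1 : g z - g m = (g z - g m - g1 m * (z - m)) + g1 m * (z - m) := by ring
    rw [h1]
    refine (norm_add_le _ _).trans ?_
    have h2 : ‖g1 m * (z - m)‖ ≤ ‖g1 m‖ * r := by
      rw [norm_mul]
      exact mul_le_mul_of_nonneg_left hzm (norm_nonneg _)
    linarith
  have hexpgz : ‖Complex.exp (g z)‖ ≤ ‖Complex.exp (g m)‖ *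
      Real.exp (‖g1 m‖ * r + G * r ^ 2 / 2) := by
    rw [Complex.norm_exp, Complex.norm_exp,
      ← Real.exp_add]
    apply Real.exp_le_exp.2
    have h3 : (g z).re - (g m).re = (g z - g m).re := by simp
    have h4 : (g z - g m).re ≤ ‖g z - g m‖ := by
      exact Complex.re_le_norm _
    linarith
  -- the exponential factor E
  set E : ℂ := Complex.exp (-(2 * (Real.pi : ℂ) * z)) with hEdef
  have hErm : (-(2 * (Real.pi : ℂ) * z)).re = -(2 * Real.pi * z.re) := by
    simp [Complex.mul_re]
  have hEnorm : ‖E‖ ≤ 0.001868 := by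
    rw [hEdef, Complex.norm_exp, hErm]
    refine le_trans ?_ sp_aux_exp_num
    apply Real.exp_le_exp.2
    have hpi := Real.pi_pos
    nlinarith
  have hden : (1 : ℂ) + E ≠ 0 := by
    intro h0
    have hE1 : E = -1 := by linear_combination h0
    rw [hE1] at hEnorm
    norm_num at hEnorm
  have h1E : (0.998132 : ℝ) ≤ ‖1 + E‖ := by
    have hh := norm_sub_norm_le (1:ℂ) (-E)
    rw [norm_neg, sub_neg_eq_add] at hh
    have h1 : ‖(1:ℂ)‖ = 1 := by norm_num
    rw [h1] at hh
    linarith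
  have hfac : ‖(2 / (1 + E)) ^ 2‖ < 4.015 := by
    rw [norm_pow, norm_div]
    have h2 : ‖(2:ℂ)‖ = 2 := by norm_num
    rw [h2]
    have hpos : (0:ℝ) < ‖1 + E‖ := by linarith
    have h3 : 2 / ‖1 + E‖ ≤ 2 / 0.998132 := by
      apply div_le_div_of_nonneg_left (by norm_num) (by norm_num) h1E
    calc (2 / ‖1 + E‖) ^ 2 ≤ (2 / 0.998132) ^ 2 := by
          apply pow_le_pow_left₀ (by positivity) h3
      _ < 4.015 := by norm_num
  -- identity
  have hLz : Complex.log (a + Complex.I * z) ≠ 0 := Complex.slitPlane_ne_zero hzl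
  have hid := sp_aux_ident n z (Complex.log (a + Complex.I * z)) hLz hden
  rw [hid]
  have hpos2 : (0:ℝ) < ‖Complex.exp (g m)‖ * Real.exp (‖g1 m‖ * r + G * r ^ 2 / 2) := by
    apply mul_pos
    · rw [Complex.norm_exp]; exact Real.exp_pos _
    · exact Real.exp_pos _
  rw [norm_mul]
  calc ‖Complex.exp (((n:ℂ)+1) * Complex.log (Complex.log (a + Complex.I * z)) -
          2 * (Real.pi:ℂ) * z)‖ * ‖(2 / (1 + E)) ^ 2‖
      ≤ (‖Complex.exp (g m)‖ * Real.exp (‖g1 m‖ * r + G * r ^ 2 / 2)) * ‖(2 / (1 + E)) ^ 2‖ :=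
        mul_le_mul_of_nonneg_right hexpgz (norm_nonneg _)
    _ < (‖Complex.exp (g m)‖ * Real.exp (‖g1 m‖ * r + G * r ^ 2 / 2)) * 4.015 :=
        (mul_lt_mul_iff_right₀ hpos2).2 hfac
    _ = 4.015 * ‖Complex.exp (g m)‖ * Real.exp (‖g1 m‖ * r + G * r ^ 2 / 2) := by ring
end

section
/- For every z ∈ ℂ with Re(z) ≥ 1, one has ‖(1 + tanh(πz))²‖ < 4.015. -/
open Complex Real

lemma exp_two_pi_gt_535 : (535.3:ℝ) < Real.exp (2*Real.pi) := by
  have h1 : (6.283184:ℝ) ≤ 2*Real.pi := by nlinarith [Real.pi_gt_d6]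
  have h2 : Real.exp (6.283184 : ℝ) ≤ Real.exp (2*Real.pi) := Real.exp_le_exp.mpr h1
  have h3 : Real.exp (6.283184:ℝ) = Real.exp 1 ^ 6 * Real.exp 0.283184 := by
    rw [← Real.exp_nat_mul, ← Real.exp_add]; norm_num
  have h4 : (2.7182818283:ℝ)^6 < Real.exp 1 ^ 6 :=
    pow_lt_pow_left₀ Real.exp_one_gt_d9 (by norm_num) (by norm_num)
  have h5 : (1:ℝ) + 0.283184 + 0.283184^2/2 + 0.283184^3/6 ≤ Real.exp 0.283184 := by
    have := Real.sum_le_exp_of_nonneg (x := 0.283184) (by norm_num) 4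
    simp [Finset.sum_range_succ, Nat.factorial] at this
    nlinarith [this]
  have h6 : (535.3:ℝ) < (2.7182818283:ℝ)^6 * ((1:ℝ) + 0.283184 + 0.283184^2/2 + 0.283184^3/6) := by
    norm_num
  calc (535.3:ℝ) < _ := h6
    _ ≤ Real.exp 1 ^ 6 * Real.exp 0.283184 := by
        apply mul_le_mul h4.le h5 (by norm_num) (by positivity)
    _ = Real.exp (6.283184:ℝ) := h3.symm
    _ ≤ _ := h2

/-- For every `z ∈ ℂ` with `Re z ≥ 1`, `‖(1 + tanh(πz))²‖ < 4.015`. -/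
theorem one_add_tanh_sq_bound (z : ℂ) (hz : 1 ≤ z.re) :
    ‖(1 + Complex.tanh (Real.pi * z)) ^ 2‖ < 4.015 := by
  set w : ℂ := Real.pi * z with hw
  have hre : w.re = Real.pi * z.re := by simp [hw]
  have hr : Real.pi ≤ w.re := by
    rw [hre]; nlinarith [Real.pi_pos]
  set E := Real.exp w.re with hE
  set F := Real.exp (-w.re) with hF
  have hFpos : 0 < F := Real.exp_pos _
  have hEpos : 0 < E := Real.exp_pos _
  have hEF : E * F = 1 := by rw [hE, hF, ← Real.exp_add]; simp
  -- bound F^2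
  have hF2 : 535.3 * (F * F) < 1 := by
    have h1 : F * F = Real.exp (-(2*w.re)) := by rw [hF, ← Real.exp_add]; ring_nf
    have h2 : Real.exp (-(2*w.re)) * Real.exp (2*Real.pi) = Real.exp (2*Real.pi - 2*w.re) := by
      rw [← Real.exp_add]; ring_nf
    have h3 : Real.exp (2*Real.pi - 2*w.re) ≤ 1 := by
      rw [← Real.exp_zero]; exact Real.exp_le_exp.mpr (by linarith)
    nlinarith [exp_two_pi_gt_535, Real.exp_pos (-(2*w.re))]
  -- cosh norm lower bound
  have hcosh : Complex.cosh w = (Complex.exp w + Complex.exp (-w)) / 2 := rfl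
  set C := ‖Complex.cosh w‖ with hC
  have hnexp : ‖Complex.exp w‖ = E := by rw [Complex.norm_exp]
  have hnexp' : ‖Complex.exp (-w)‖ = F := by
    rw [Complex.norm_exp]; simp [hF]
  have hClb : (E - F) / 2 ≤ C := by
    have h1 : E ≤ ‖Complex.exp w + Complex.exp (-w)‖ + F := by
      calc E = ‖(Complex.exp w + Complex.exp (-w)) + (- Complex.exp (-w))‖ := by
              rw [← hnexp]; ring_nf
        _ ≤ ‖Complex.exp w + Complex.exp (-w)‖ + ‖- Complex.exp (-w)‖ := norm_add_le _ _
        _ = ‖Complex.exp w + Complex.exp (-w)‖ + F := by rw [norm_neg, hnexp']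
    have h2 : C = ‖Complex.exp w + Complex.exp (-w)‖ / 2 := by
      rw [hC, hcosh]; simp [norm_div]
    linarith
  have hEgtF : F < E := by
    rw [hE, hF]; exact Real.exp_lt_exp.mpr (by nlinarith [Real.pi_pos])
  have hCpos : 0 < C := lt_of_lt_of_le (by linarith) hClb
  have hcosh0 : Complex.cosh w ≠ 0 := by
    intro h; rw [hC, h] at hCpos; simp at hCpos
  -- (1 + tanh w) * cosh w = exp w
  have key : (1 + Complex.tanh w) * Complex.cosh w = Complex.exp w := by
    rw [Complex.tanh_eq_sinh_div_cosh]
    field_simp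
    rw [Complex.cosh_add_sinh]
  set b := ‖1 + Complex.tanh w‖ with hb
  have hbC : b * C = E := by
    rw [hb, hC, ← norm_mul, key, hnexp]
  -- b < 2.003744
  have hx : 2.003744 * F < 0.003744 * E := by nlinarith
  have hblt : b < 2.003744 := by
    have h1 : E < 2.003744 * C := by nlinarith
    nlinarith
  have hbnn : 0 ≤ b := norm_nonneg _
  calc ‖(1 + Complex.tanh w) ^ 2‖ = b ^ 2 := by rw [norm_pow]
    _ < 4.015 := by nlinarith
end
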